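/- Let f and g be norms on ℝ^p, let g* denote the dual norm of g, let (a, b) be a linear classifier with a ≠ 0, let ρ > 0, let x_F ∈ ℝ^p satisfy ⟪a, x_F⟫ < b, and let x_RCF be an optimal robust counterfactual of x_F under f with robustness norm g and radius ρ, with x_RCF ≠ x_F. Then there exists λ ∈ ℝ with λ ≠ 0 such that ⟪a, x_RCF⟫ = b + ρ · g*(a) and λ • a ∈ ∂f(x_RCF − x_F). -/

import Mathlib

open Finset

noncomputable section

/-- The standard inner product on `Fin p → ℝ`. -/
def dot {p : ℕ} (a x : Fin p → ℝ) : ℝ := ∑ k, a k * x k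

/-- `f` is a norm on `ℝ^p`. -/
def IsNorm {p : ℕ} (f : (Fin p → ℝ) → ℝ) : Prop :=
  (∀ x, f x = 0 ↔ x = 0) ∧ (∀ (c : ℝ) (x : Fin p → ℝ), f (c • x) = |c| * f x) ∧
    (∀ x y, f (x + y) ≤ f x + f y)

/-- The dual norm `f*(w) = sup { ⟪w, v⟫ : f v ≤ 1 }`. -/
def dualNorm {p : ℕ} (f : (Fin p → ℝ) → ℝ) (w : Fin p → ℝ) : ℝ :=
  sSup {t : ℝ | ∃ v : Fin p → ℝ, f v ≤ 1 ∧ t = dot w v}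

/-- `xCF` is an optimal counterfactual of the factual `xF` (classified 'No') under norm `f`. -/
def IsOptCF {p : ℕ} (a : Fin p → ℝ) (b : ℝ) (f : (Fin p → ℝ) → ℝ)
    (xF xCF : Fin p → ℝ) : Prop :=
  b ≤ dot a xCF ∧ ∀ z : Fin p → ℝ, b ≤ dot a z → f (xCF - xF) ≤ f (z - xF)

/-- `xRCF` is an optimal robust counterfactual of the factual `xF` (classified 'No')
under norm `f`, with robustness norm `g` and radius `ρ`. -/
def IsOptRCF {p : ℕ} (a : Fin p → ℝ) (b : ℝ) (f g : (Fin p → ℝ) → ℝ) (ρ : ℝ)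
    (xF xRCF : Fin p → ℝ) : Prop :=
  (∀ s : Fin p → ℝ, g s ≤ ρ → b ≤ dot a (xRCF + s)) ∧
    ∀ z : Fin p → ℝ, (∀ s : Fin p → ℝ, g s ≤ ρ → b ≤ dot a (z + s)) →
      f (xRCF - xF) ≤ f (z - xF)

/-- `w` is a subgradient of `f` at `x₀`. -/
def IsSubgradient {p : ℕ} (f : (Fin p → ℝ) → ℝ) (x₀ w : Fin p → ℝ) : Prop :=
  ∀ y : Fin p → ℝ, f x₀ + dot w (y - x₀) ≤ f y

lemma dot_add_right' {p : ℕ} (a x y : Fin p → ℝ) : dot a (x + y) = dot a x + dot a y := by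
  simp [dot, mul_add, Finset.sum_add_distrib]

lemma dot_smul_right' {p : ℕ} (a : Fin p → ℝ) (c : ℝ) (x : Fin p → ℝ) :
    dot a (c • x) = c * dot a x := by
  simp [dot, Finset.mul_sum, mul_left_comm]

lemma dot_zero_right' {p : ℕ} (a : Fin p → ℝ) : dot a (0 : Fin p → ℝ) = 0 := by simp [dot]

lemma dot_sub_right' {p : ℕ} (a x y : Fin p → ℝ) : dot a (x - y) = dot a x - dot a y := by
  simp [dot, mul_sub, Finset.sum_sub_distrib]

lemma dot_neg_right' {p : ℕ} (a x : Fin p → ℝ) : dot a (-x) = -dot a x := by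
  simp [dot]

lemma dot_smul_left' {p : ℕ} (a : Fin p → ℝ) (c : ℝ) (x : Fin p → ℝ) :
    dot (c • a) x = c * dot a x := by
  simp [dot, Finset.mul_sum, mul_assoc]

lemma norm_nonneg'' {p : ℕ} {f : (Fin p → ℝ) → ℝ} (hf : IsNorm f) (x : Fin p → ℝ) :
    0 ≤ f x := by
  have h0 : f 0 = 0 := (hf.1 0).2 rfl
  have hneg : f (-x) = f x := by
    have := hf.2.1 (-1) x
    simpa using this
  have := hf.2.2 x (-x)
  simp [h0, hneg] at this
  linarith

/-- Optimality conditions for robust counterfactuals (Lemma 4): an optimal robust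
counterfactual satisfies `⟪a, x_RCF⟫ = b + ρ·g*(a)` and some nonzero multiple of `a`
is a subgradient of the norm `f` at `x_RCF − x_F`. -/
theorem rcf_optimality_conditions {p : ℕ} (hp : 1 ≤ p)
    (f g : (Fin p → ℝ) → ℝ) (hf : IsNorm f) (hg : IsNorm g)
    (a : Fin p → ℝ) (ha : a ≠ 0) (b : ℝ) (ρ : ℝ) (hρ : 0 < ρ)
    (xF xRCF : Fin p → ℝ) (hxF : dot a xF < b)
    (hopt : IsOptRCF a b f g ρ xF xRCF) (hne : xRCF ≠ xF) :
    ∃ l : ℝ, l ≠ 0 ∧ dot a xRCF = b + ρ * dualNorm g a ∧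
      IsSubgradient f (xRCF - xF) (l • a) := by
  obtain ⟨hfeas, hmin⟩ := hopt
  have hg0 : g 0 = 0 := (hg.1 0).2 rfl
  set S : Set ℝ := {t : ℝ | ∃ v : Fin p → ℝ, g v ≤ 1 ∧ t = dot a v} with hSdef
  have hS0 : (0 : ℝ) ∈ S := ⟨0, by simp [hg0], by simp [dot_zero_right']⟩
  have hSne : S.Nonempty := ⟨0, hS0⟩
  -- bounded above, using feasibility of xRCF
  have hbd : ∀ t ∈ S, t ≤ (dot a xRCF - b) / ρ := by
    rintro t ⟨v, hv, rfl⟩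
    have hr : -(ρ • v) = (-ρ) • v := by simp
    have hgs : g (-(ρ • v)) ≤ ρ := by
      rw [hr, hg.2.1, abs_neg, abs_of_pos hρ]
      exact mul_le_of_le_one_right hρ.le hv
    have hfb := hfeas _ hgs
    rw [show xRCF + -(ρ • v) = xRCF - ρ • v by abel, dot_sub_right', dot_smul_right'] at hfb
    rw [le_div_iff₀ hρ]
    linarith
  have hbdd : BddAbove S := ⟨(dot a xRCF - b) / ρ, fun t ht => hbd t ht⟩
  have hD : dualNorm g a = sSup S := rfl
  set D : ℝ := sSup S with hDdef
  have hD0 : 0 ≤ D := le_csSup hbdd hS0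
  -- upper feasibility bound: feasible z satisfies b + ρ D ≤ dot a z
  have hub : ∀ z : Fin p → ℝ, (∀ s, g s ≤ ρ → b ≤ dot a (z + s)) → b + ρ * D ≤ dot a z := by
    intro z hz
    have hle : D ≤ (dot a z - b) / ρ := by
      apply csSup_le hSne
      rintro t ⟨v, hv, rfl⟩
      have hr : -(ρ • v) = (-ρ) • v := by simp
      have hgs : g (-(ρ • v)) ≤ ρ := by
        rw [hr, hg.2.1, abs_neg, abs_of_pos hρ]
        exact mul_le_of_le_one_right hρ.le hv
      have hfb := hz _ hgs
      rw [show z + -(ρ • v) = z - ρ • v by abel, dot_sub_right', dot_smul_right'] at hfb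
      rw [le_div_iff₀ hρ]
      linarith
    rw [le_div_iff₀ hρ] at hle
    linarith [hle]
  -- conversely: b + ρ D ≤ dot a z implies feasibility
  have hlb : ∀ z : Fin p → ℝ, b + ρ * D ≤ dot a z → ∀ s, g s ≤ ρ → b ≤ dot a (z + s) := by
    intro z hz s hs
    have hmem : dot a (-(ρ⁻¹ • s)) ∈ S := by
      refine ⟨-(ρ⁻¹ • s), ?_, rfl⟩
      have hr : -(ρ⁻¹ • s) = (-ρ⁻¹) • s := by simp
      rw [hr, hg.2.1, abs_neg, abs_of_pos (inv_pos.mpr hρ)]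
      rw [inv_mul_le_iff₀ hρ, mul_one]
      exact hs
    have hle := le_csSup hbdd hmem
    rw [dot_neg_right', dot_smul_right'] at hle
    have h2 : -ρ * D ≤ dot a s := by
      have := mul_le_mul_of_nonneg_left hle hρ.le
      rw [mul_neg, mul_inv_cancel_left₀ (ne_of_gt hρ)] at this
      linarith
    rw [dot_add_right']
    linarith
  have h1 : b + ρ * D ≤ dot a xRCF := hub xRCF hfeas
  -- positivity of f at d
  set d : Fin p → ℝ := xRCF - xF with hddef
  have hdne : d ≠ 0 := sub_ne_zero.mpr hne
  have hfd : 0 < f d := by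
    rcases lt_or_eq_of_le (norm_nonneg'' hf d) with h | h
    · exact h
    · exact absurd ((hf.1 d).1 h.symm) hdne
  have hxFb' : dot a xF < b + ρ * D := by nlinarith
  -- equality
  have heq : dot a xRCF = b + ρ * D := by
    by_contra hne'
    have hgt : b + ρ * D < dot a xRCF := lt_of_le_of_ne h1 (Ne.symm hne')
    set c0 : ℝ := dot a xRCF - dot a xF with hc0
    have hc0pos : 0 < c0 := by simp only [hc0]; linarith
    set t : ℝ := (b + ρ * D - dot a xF) / c0 with htdef
    have ht0 : 0 < t := div_pos (by linarith) hc0pos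
    have ht1 : t < 1 := by
      rw [div_lt_one hc0pos]
      simp only [hc0]
      linarith
    set z : Fin p → ℝ := xF + t • d with hzdef
    have hdotz : dot a z = b + ρ * D := by
      rw [hzdef, dot_add_right', dot_smul_right', hddef, dot_sub_right']
      rw [htdef]
      field_simp
      rw [hc0]; ring
    have hzfeas := hlb z (le_of_eq hdotz.symm)
    have hmz := hmin z hzfeas
    have hz' : z - xF = t • d := by rw [hzdef]; abel
    rw [hz', hf.2.1, abs_of_pos ht0] at hmz
    nlinarith
  -- subgradient
  set c : ℝ := dot a d with hcdef
  have hcval : c = b + ρ * D - dot a xF := by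
    rw [hcdef, hddef, dot_sub_right', heq]
  have hcpos : 0 < c := by rw [hcval]; linarith
  set l : ℝ := f d / c with hldef
  have hlpos : 0 < l := div_pos hfd hcpos
  have hlc : l * c = f d := div_mul_cancel₀ _ (ne_of_gt hcpos)
  have key : ∀ y : Fin p → ℝ, l * dot a y ≤ f y := by
    intro y
    rcases le_or_gt (dot a y) 0 with hy | hy
    · have : l * dot a y ≤ 0 := mul_nonpos_of_nonneg_of_nonpos hlpos.le hy
      exact this.trans (norm_nonneg'' hf y)
    · set u : ℝ := c / dot a y with hudef
      have hu0 : 0 < u := div_pos hcpos hy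
      set z : Fin p → ℝ := xF + u • y with hzdef
      have hdotz : dot a z = b + ρ * D := by
        rw [hzdef, dot_add_right', dot_smul_right', hudef]
        field_simp
        linarith [hcval]
      have hzfeas := hlb z (le_of_eq hdotz.symm)
      have hmz := hmin z hzfeas
      have hz' : z - xF = u • y := by rw [hzdef]; abel
      rw [hz', hf.2.1, abs_of_pos hu0] at hmz
      -- hmz : f d ≤ u * f y, with u = c / dot a y
      rw [hldef, div_mul_eq_mul_div, div_le_iff₀ hcpos]
      have := mul_le_mul_of_nonneg_right hmz hy.le
      have h2 : u * f y * dot a y = f y * c := by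
        rw [hudef]
        field_simp
      linarith [this, h2]
  refine ⟨l, ne_of_gt hlpos, by rw [hD]; exact heq, fun y => ?_⟩
  rw [dot_smul_left', dot_sub_right', mul_sub, ← hcdef, hlc]
  linarith [key y]
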